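/- Let k be a field and let X and Y be finite sets. Then the map sending a function u : Y → X to the k-algebra homomorphism (X → k) → (Y → k) given by precomposition with u is a bijection between the set of functions Y → X and the set of k-algebra homomorphisms from the function algebra (X → k) to the function algebra (Y → k). -/

import Mathlib

/-!
STATEMENT 17: For finite sets X, Y and a field k, precomposition is a bijection between
functions Y → X and k-algebra homomorphisms (X → k) →ₐ[k] (Y → k).
-/

universe u v

/-- Precomposition with `u : Y → X` as a `k`-algebra homomorphism between function
algebras. -/
def compAlgHom (k : Type u) [Field k] {X Y : Type v} (u : Y → X) :
    (X → k) →ₐ[k] (Y → k) where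
  toFun f := f ∘ u
  map_one' := rfl
  map_mul' _ _ := rfl
  map_zero' := rfl
  map_add' _ _ := rfl
  commutes' _ := rfl

theorem stmt_17 (k : Type u) [Field k] (X Y : Type v) [Finite X] [Finite Y] :
    Function.Bijective (fun u : Y → X => compAlgHom k u) := by
  classical
  cases nonempty_fintype X
  constructor
  · intro u v h
    funext y
    have h1 := congrFun (congrArg (fun φ => φ (Pi.single (u y) (1 : k))) h) y
    change (Pi.single (u y) (1:k) : X → k) (u y) = (Pi.single (u y) (1:k) : X → k) (v y) at h1
    simp only [compAlgHom, AlgHom.coe_mk, RingHom.coe_mk, MonoidHom.coe_mk, OneHom.coe_mk,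
      Function.comp_apply, Pi.single_apply] at h1
    by_contra hne
    rw [if_pos trivial, if_neg (fun hh => hne hh.symm)] at h1
    exact one_ne_zero h1
  · intro φ
    have hsum : ∀ y, ∑ x, φ (Pi.single x (1 : k)) y = 1 := by
      intro y
      have h1 : (∑ x : X, Pi.single x (1 : k)) = (1 : X → k) := by
        funext z
        simp [Finset.sum_apply, Pi.single_apply]
      calc ∑ x, φ (Pi.single x (1 : k)) y = φ (∑ x : X, Pi.single x (1 : k)) y := by
            rw [map_sum, Finset.sum_apply]
        _ = 1 := by rw [h1, map_one]; rfl
    have horth : ∀ y (x x' : X), x ≠ x' →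
        φ (Pi.single x (1 : k)) y * φ ((Pi.single x' (1:k) : X → k)) y = 0 := by
      intro y x x' hxx
      have hz : (Pi.single x (1:k) : X → k) * (Pi.single x' (1:k) : X → k) = 0 := by
        funext z
        simp only [Pi.mul_apply, Pi.single_apply, Pi.zero_apply]
        split_ifs <;> simp_all
      calc φ (Pi.single x (1 : k)) y * φ ((Pi.single x' (1:k) : X → k)) y
          = φ ((Pi.single x (1:k) : X → k) * (Pi.single x' (1:k) : X → k)) y := by rw [map_mul]; rfl
        _ = 0 := by rw [hz, map_zero]; rfl
    have hex : ∀ y, ∃ x, φ (Pi.single x (1 : k)) y = 1 ∧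
        ∀ x', x' ≠ x → φ (Pi.single x' (1 : k)) y = 0 := by
      intro y
      obtain ⟨x, hx⟩ : ∃ x, φ (Pi.single x (1 : k)) y ≠ 0 := by
        by_contra hc
        push_neg at hc
        have hs := hsum y
        rw [Finset.sum_eq_zero (fun x _ => hc x)] at hs
        exact zero_ne_one hs
      have hzero : ∀ x', x' ≠ x → φ (Pi.single x' (1 : k)) y = 0 := by
        intro x' hx'
        have := horth y x x' (Ne.symm hx')
        exact (mul_eq_zero.mp this).resolve_left hx
      refine ⟨x, ?_, hzero⟩
      have hs := hsum y
      rw [Finset.sum_eq_single x (fun b _ hb => hzero b hb)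
        (fun h => absurd (Finset.mem_univ x) h)] at hs
      exact hs
    choose u hu1 hu2 using hex
    refine ⟨u, ?_⟩
    apply AlgHom.ext
    intro f
    funext y
    show f (u y) = φ f y
    have hf : f = ∑ x, f x • (Pi.single x (1:k) : X → k) := by
      funext z
      simp [Finset.sum_apply, Pi.single_apply]
    have key : φ f y = f (u y) := by
      conv_lhs => rw [hf]
      rw [map_sum, Finset.sum_apply]
      rw [Finset.sum_eq_single (u y)]
      · rw [map_smul]; simp [hu1 y]
      · intro b _ hb
        rw [map_smul]
        simp [hu2 y b hb]
      · intro h; exact absurd (Finset.mem_univ _) h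
    exact key.symm
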